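/- For all m ≥ 1, ∑_{t≥0} (-1)^t C(m, 5t) = (2/5)(φ+2)^{m/2} (cos(πm/10) + (φ-1)^m cos(3πm/10)), where φ = (1+√5)/2 is the golden ratio. -/

import Mathlib

open Finset Real

noncomputable def auxA (m : ℕ) : ℝ :=
  (2 * Real.cos (Real.pi / 10)) ^ m * Real.cos (Real.pi * m / 10)

noncomputable def auxB (m : ℕ) : ℝ :=
  (2 * Real.cos (3 * Real.pi / 10)) ^ m * Real.cos (3 * Real.pi * m / 10)

noncomputable def auxG (m : ℕ) : ℝ := 2 / 5 * (auxA m + auxB m)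

noncomputable def auxT (r m : ℕ) : ℝ :=
  ∑ t ∈ Finset.range (m + 1), (-1 : ℝ) ^ t * (Nat.choose m (5 * t + r) : ℝ)

lemma hsqrt5 : Real.sqrt 5 ^ 2 = 5 := Real.sq_sqrt (by norm_num)

lemma hphi : goldenRatio = (1 + Real.sqrt 5) / 2 := rfl

lemma cos_pi_div_ten_sq : Real.cos (Real.pi / 10) ^ 2 = (5 + Real.sqrt 5) / 8 := by
  have h := Real.cos_pi_div_five
  have h2 : Real.cos (Real.pi / 5) = 2 * Real.cos (Real.pi / 10) ^ 2 - 1 := by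
    rw [show Real.pi / 5 = 2 * (Real.pi / 10) by ring, Real.cos_two_mul]
  linear_combination h / 2 - h2 / 2

lemma cos_two_pi_div_five' : Real.cos (2 * Real.pi / 5) = (Real.sqrt 5 - 1) / 4 := by
  have h := Real.cos_pi_div_five
  have h2 : Real.cos (2 * Real.pi / 5) = 2 * Real.cos (Real.pi / 5) ^ 2 - 1 := by
    rw [show 2 * Real.pi / 5 = 2 * (Real.pi / 5) by ring, Real.cos_two_mul]
  rw [h2, h]
  linear_combination hsqrt5 / 8

lemma cos_three_pi_div_ten_sq : Real.cos (3 * Real.pi / 10) ^ 2 = (5 - Real.sqrt 5) / 8 := by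
  have h2 : Real.cos (3 * Real.pi / 5) = 2 * Real.cos (3 * Real.pi / 10) ^ 2 - 1 := by
    rw [show 3 * Real.pi / 5 = 2 * (3 * Real.pi / 10) by ring, Real.cos_two_mul]
  have h3 : Real.cos (3 * Real.pi / 5) = -Real.cos (2 * Real.pi / 5) := by
    rw [show 3 * Real.pi / 5 = Real.pi - 2 * Real.pi / 5 by ring, Real.cos_pi_sub]
  have h4 := cos_two_pi_div_five'
  linear_combination (h3 - h2 - h4) / 2

lemma cos_pi_div_ten_pos : 0 < Real.cos (Real.pi / 10) :=
  Real.cos_pos_of_mem_Ioo ⟨by linarith [Real.pi_pos], by linarith [Real.pi_pos]⟩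

lemma cos_three_pi_div_ten_pos : 0 < Real.cos (3 * Real.pi / 10) :=
  Real.cos_pos_of_mem_Ioo ⟨by linarith [Real.pi_pos], by linarith [Real.pi_pos]⟩

lemma gold_add_two : goldenRatio + 2 = (2 * Real.cos (Real.pi / 10)) ^ 2 := by
  rw [hphi]
  linear_combination (-4 : ℝ) * cos_pi_div_ten_sq

lemma three_sub_gold : 3 - goldenRatio = (2 * Real.cos (3 * Real.pi / 10)) ^ 2 := by
  rw [hphi]
  linear_combination (-4 : ℝ) * cos_three_pi_div_ten_sq

lemma c10 : Real.sqrt (goldenRatio + 2) = 2 * Real.cos (Real.pi / 10) := by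
  rw [gold_add_two, Real.sqrt_sq (by linarith [cos_pi_div_ten_pos])]

lemma c310 : Real.sqrt (goldenRatio + 2) * (goldenRatio - 1) = 2 * Real.cos (3 * Real.pi / 10) := by
  have hg1 : (0 : ℝ) ≤ goldenRatio - 1 := by linarith [one_lt_goldenRatio]
  have hg2 : (0 : ℝ) ≤ goldenRatio + 2 := by linarith [goldenRatio_pos]
  have h : Real.sqrt (goldenRatio + 2) * (goldenRatio - 1) =
      Real.sqrt ((goldenRatio + 2) * (goldenRatio - 1) ^ 2) := by
    rw [Real.sqrt_mul hg2, Real.sqrt_sq hg1]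
  rw [h, show (goldenRatio + 2) * (goldenRatio - 1) ^ 2 = (2 * Real.cos (3 * Real.pi / 10)) ^ 2 by
    rw [hphi]
    linear_combination ((Real.sqrt 5 + 3) / 8) * hsqrt5 - 4 * cos_three_pi_div_ten_sq,
    Real.sqrt_sq (by linarith [cos_three_pi_div_ten_pos])]

lemma recA (m : ℕ) : auxA (m + 2) = (goldenRatio + 2) * (auxA (m + 1) - auxA m) := by
  unfold auxA
  push_cast
  rw [gold_add_two,
    show Real.pi * ((m : ℝ) + 2) / 10 = Real.pi * ((m : ℝ) + 1) / 10 + Real.pi / 10 by ring,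
    show Real.pi * (m : ℝ) / 10 = Real.pi * ((m : ℝ) + 1) / 10 - Real.pi / 10 by ring,
    Real.cos_add, Real.cos_sub]
  ring

lemma recB (m : ℕ) : auxB (m + 2) = (3 - goldenRatio) * (auxB (m + 1) - auxB m) := by
  unfold auxB
  push_cast
  rw [three_sub_gold,
    show 3 * Real.pi * ((m : ℝ) + 2) / 10 = 3 * Real.pi * ((m : ℝ) + 1) / 10 + 3 * Real.pi / 10 by
      ring,
    show 3 * Real.pi * (m : ℝ) / 10 = 3 * Real.pi * ((m : ℝ) + 1) / 10 - 3 * Real.pi / 10 by ring,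
    Real.cos_add, Real.cos_sub]
  ring

lemma hA0 : auxA 0 = 1 := by simp [auxA]

lemma hB0 : auxB 0 = 1 := by simp [auxB]

lemma hA1 : auxA 1 = (5 + Real.sqrt 5) / 4 := by
  unfold auxA
  push_cast
  rw [pow_one, show Real.pi * 1 / 10 = Real.pi / 10 by ring]
  linear_combination 2 * cos_pi_div_ten_sq

lemma hB1 : auxB 1 = (5 - Real.sqrt 5) / 4 := by
  unfold auxB
  push_cast
  rw [pow_one, show 3 * Real.pi * 1 / 10 = 3 * Real.pi / 10 by ring]
  linear_combination 2 * cos_three_pi_div_ten_sq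

lemma hA2 : auxA 2 = (5 + 3 * Real.sqrt 5) / 4 := by
  have h : auxA 2 = (goldenRatio + 2) * (auxA 1 - auxA 0) := recA 0
  rw [h, hA1, hA0, hphi]
  linear_combination hsqrt5 / 8

lemma hB2 : auxB 2 = (5 - 3 * Real.sqrt 5) / 4 := by
  have h : auxB 2 = (3 - goldenRatio) * (auxB 1 - auxB 0) := recB 0
  rw [h, hB1, hB0, hphi]
  linear_combination hsqrt5 / 8

lemma hA3 : auxA 3 = (5 + 5 * Real.sqrt 5) / 4 := by
  have h : auxA 3 = (goldenRatio + 2) * (auxA 2 - auxA 1) := recA 1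
  rw [h, hA2, hA1, hphi]
  linear_combination hsqrt5 / 4

lemma hB3 : auxB 3 = (5 - 5 * Real.sqrt 5) / 4 := by
  have h : auxB 3 = (3 - goldenRatio) * (auxB 2 - auxB 1) := recB 1
  rw [h, hB2, hB1, hphi]
  linear_combination hsqrt5 / 4

lemma hA4 : auxA 4 = (5 + 5 * Real.sqrt 5) / 4 := by
  have h : auxA 4 = (goldenRatio + 2) * (auxA 3 - auxA 2) := recA 2
  rw [h, hA3, hA2, hphi]
  linear_combination hsqrt5 / 4

lemma hB4 : auxB 4 = (5 - 5 * Real.sqrt 5) / 4 := by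
  have h : auxB 4 = (3 - goldenRatio) * (auxB 3 - auxB 2) := recB 2
  rw [h, hB3, hB2, hphi]
  linear_combination hsqrt5 / 4

lemma hG1 : auxG 1 = 1 := by rw [auxG, hA1, hB1]; ring
lemma hG2 : auxG 2 = 1 := by rw [auxG, hA2, hB2]; ring
lemma hG3 : auxG 3 = 1 := by rw [auxG, hA3, hB3]; ring
lemma hG4 : auxG 4 = 1 := by rw [auxG, hA4, hB4]; ring

lemma auxG_rec (m : ℕ) : auxG (m + 5) =
    5 * auxG (m + 4) - 10 * auxG (m + 3) + 10 * auxG (m + 2) - 5 * auxG (m + 1) := by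
  have ra1 : auxA (m + 3) = (goldenRatio + 2) * (auxA (m + 2) - auxA (m + 1)) := recA (m + 1)
  have ra2 : auxA (m + 4) = (goldenRatio + 2) * (auxA (m + 3) - auxA (m + 2)) := recA (m + 2)
  have ra3 : auxA (m + 5) = (goldenRatio + 2) * (auxA (m + 4) - auxA (m + 3)) := recA (m + 3)
  have rb1 : auxB (m + 3) = (3 - goldenRatio) * (auxB (m + 2) - auxB (m + 1)) := recB (m + 1)
  have rb2 : auxB (m + 4) = (3 - goldenRatio) * (auxB (m + 3) - auxB (m + 2)) := recB (m + 2)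
  have rb3 : auxB (m + 5) = (3 - goldenRatio) * (auxB (m + 4) - auxB (m + 3)) := recB (m + 3)
  have hsq : goldenRatio ^ 2 = goldenRatio + 1 := goldenRatio_sq
  unfold auxG
  linear_combination (2 / 5 : ℝ) * (ra3 - (3 - goldenRatio) * ra2 + (3 - goldenRatio) * ra1 +
    rb3 - (goldenRatio + 2) * rb2 + (goldenRatio + 2) * rb1 +
    (auxA (m + 3) - 2 * auxA (m + 2) + auxA (m + 1) +
      auxB (m + 3) - 2 * auxB (m + 2) + auxB (m + 1)) * hsq)

lemma auxT_step (r m : ℕ) : auxT (r + 1) (m + 1) = auxT (r + 1) m + auxT r m := by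
  unfold auxT
  rw [Finset.sum_range_succ,
    Nat.choose_eq_zero_of_lt (show m + 1 < 5 * (m + 1) + (r + 1) by omega)]
  have key : ∀ t ∈ Finset.range (m + 1),
      (-1 : ℝ) ^ t * ((Nat.choose (m + 1) (5 * t + (r + 1)) : ℕ) : ℝ) =
        (-1 : ℝ) ^ t * (Nat.choose m (5 * t + (r + 1)) : ℝ) +
          (-1 : ℝ) ^ t * (Nat.choose m (5 * t + r) : ℝ) := by
    intro t _
    rw [show 5 * t + (r + 1) = (5 * t + r) + 1 by ring, Nat.choose_succ_succ]
    push_cast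
    ring
  rw [Finset.sum_congr rfl key, Finset.sum_add_distrib]
  push_cast
  ring

lemma auxT_aux (n : ℕ) :
    auxT 0 n = 1 - ∑ i ∈ Finset.range n, (-1 : ℝ) ^ i * (Nat.choose n (5 * i + 5) : ℝ) := by
  unfold auxT
  rw [Finset.sum_range_succ']
  have key : ∀ i ∈ Finset.range n,
      (-1 : ℝ) ^ (i + 1) * ((Nat.choose n (5 * (i + 1) + 0) : ℕ) : ℝ) =
        -((-1 : ℝ) ^ i * (Nat.choose n (5 * i + 5) : ℝ)) := by
    intro i _
    rw [show 5 * (i + 1) + 0 = 5 * i + 5 by ring, pow_succ]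
    ring
  rw [Finset.sum_congr rfl key, Finset.sum_neg_distrib]
  norm_num
  ring

lemma auxT_step0 (m : ℕ) : auxT 0 (m + 1) = auxT 0 m - auxT 4 m := by
  have h1 := auxT_aux (m + 1)
  have h2 := auxT_aux m
  have key : ∀ i ∈ Finset.range (m + 1),
      (-1 : ℝ) ^ i * ((Nat.choose (m + 1) (5 * i + 5) : ℕ) : ℝ) =
        (-1 : ℝ) ^ i * (Nat.choose m (5 * i + 4) : ℝ) +
          (-1 : ℝ) ^ i * (Nat.choose m (5 * i + 5) : ℝ) := by
    intro i _
    rw [show 5 * i + 5 = (5 * i + 4) + 1 by ring, Nat.choose_succ_succ]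
    push_cast
    ring
  rw [Finset.sum_congr rfl key, Finset.sum_add_distrib] at h1
  have e4 : ∑ i ∈ Finset.range (m + 1), (-1 : ℝ) ^ i * (Nat.choose m (5 * i + 4) : ℝ) =
      auxT 4 m := rfl
  have e5 : ∑ i ∈ Finset.range (m + 1), (-1 : ℝ) ^ i * (Nat.choose m (5 * i + 5) : ℝ) =
      ∑ i ∈ Finset.range m, (-1 : ℝ) ^ i * (Nat.choose m (5 * i + 5) : ℝ) := by
    rw [Finset.sum_range_succ, Nat.choose_eq_zero_of_lt (show m < 5 * m + 5 by omega)]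
    norm_num
  rw [e4, e5] at h1
  rw [h1, h2]
  ring

lemma auxT_rec (m : ℕ) : auxT 0 (m + 5) =
    5 * auxT 0 (m + 4) - 10 * auxT 0 (m + 3) + 10 * auxT 0 (m + 2) - 5 * auxT 0 (m + 1) := by
  have s00 : auxT 0 (m + 1) = auxT 0 m - auxT 4 m := auxT_step0 m
  have s01 : auxT 0 (m + 2) = auxT 0 (m + 1) - auxT 4 (m + 1) := auxT_step0 (m + 1)
  have s02 : auxT 0 (m + 3) = auxT 0 (m + 2) - auxT 4 (m + 2) := auxT_step0 (m + 2)
  have s03 : auxT 0 (m + 4) = auxT 0 (m + 3) - auxT 4 (m + 3) := auxT_step0 (m + 3)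
  have s04 : auxT 0 (m + 5) = auxT 0 (m + 4) - auxT 4 (m + 4) := auxT_step0 (m + 4)
  have s40 : auxT 4 (m + 1) = auxT 4 m + auxT 3 m := auxT_step 3 m
  have s41 : auxT 4 (m + 2) = auxT 4 (m + 1) + auxT 3 (m + 1) := auxT_step 3 (m + 1)
  have s42 : auxT 4 (m + 3) = auxT 4 (m + 2) + auxT 3 (m + 2) := auxT_step 3 (m + 2)
  have s43 : auxT 4 (m + 4) = auxT 4 (m + 3) + auxT 3 (m + 3) := auxT_step 3 (m + 3)
  have s30 : auxT 3 (m + 1) = auxT 3 m + auxT 2 m := auxT_step 2 m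
  have s31 : auxT 3 (m + 2) = auxT 3 (m + 1) + auxT 2 (m + 1) := auxT_step 2 (m + 1)
  have s32 : auxT 3 (m + 3) = auxT 3 (m + 2) + auxT 2 (m + 2) := auxT_step 2 (m + 2)
  have s20 : auxT 2 (m + 1) = auxT 2 m + auxT 1 m := auxT_step 1 m
  have s21 : auxT 2 (m + 2) = auxT 2 (m + 1) + auxT 1 (m + 1) := auxT_step 1 (m + 1)
  have s10 : auxT 1 (m + 1) = auxT 1 m + auxT 0 m := auxT_step 0 m
  linarith

lemma hT1 : auxT 0 1 = 1 := by
  norm_num [auxT, Finset.sum_range_succ, show Nat.choose 1 5 = 0 from rfl]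

lemma hT2 : auxT 0 2 = 1 := by
  norm_num [auxT, Finset.sum_range_succ, show Nat.choose 2 5 = 0 from rfl,
    show Nat.choose 2 10 = 0 from rfl]

lemma hT3 : auxT 0 3 = 1 := by
  norm_num [auxT, Finset.sum_range_succ, show Nat.choose 3 5 = 0 from rfl,
    show Nat.choose 3 10 = 0 from rfl, show Nat.choose 3 15 = 0 from rfl]

lemma hT4 : auxT 0 4 = 1 := by
  norm_num [auxT, Finset.sum_range_succ, show Nat.choose 4 5 = 0 from rfl,
    show Nat.choose 4 10 = 0 from rfl, show Nat.choose 4 15 = 0 from rfl,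
    show Nat.choose 4 20 = 0 from rfl]

lemma key_all (n : ℕ) : auxT 0 (n + 1) = auxG (n + 1) ∧ auxT 0 (n + 2) = auxG (n + 2) ∧
    auxT 0 (n + 3) = auxG (n + 3) ∧ auxT 0 (n + 4) = auxG (n + 4) := by
  induction n with
  | zero =>
    refine ⟨?_, ?_, ?_, ?_⟩
    · rw [show (0 + 1 : ℕ) = 1 from rfl, hT1, hG1]
    · rw [show (0 + 2 : ℕ) = 2 from rfl, hT2, hG2]
    · rw [show (0 + 3 : ℕ) = 3 from rfl, hT3, hG3]
    · rw [show (0 + 4 : ℕ) = 4 from rfl, hT4, hG4]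
  | succ k ih =>
    obtain ⟨p1, p2, p3, p4⟩ := ih
    have p5 : auxT 0 (k + 5) = auxG (k + 5) := by
      rw [auxT_rec k, auxG_rec k, p1, p2, p3, p4]
    exact ⟨p2, p3, p4, p5⟩

theorem K1_order5_closed_form (m : ℕ) (hm : 1 ≤ m) :
    (∑ t ∈ Finset.range (m + 1), (-1 : ℝ) ^ t * (Nat.choose m (5 * t) : ℝ)) =
      (2 / 5) * (Real.sqrt (goldenRatio + 2)) ^ m *
        (Real.cos (Real.pi * m / 10) +
          (goldenRatio - 1) ^ m * Real.cos (3 * Real.pi * m / 10)) := by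
  obtain ⟨n, rfl⟩ : ∃ n, m = n + 1 := ⟨m - 1, by omega⟩
  have hL : (∑ t ∈ Finset.range (n + 1 + 1), (-1 : ℝ) ^ t * (Nat.choose (n + 1) (5 * t) : ℝ)) =
      auxT 0 (n + 1) := by
    simp [auxT]
  have hR : auxG (n + 1) = (2 / 5) * (Real.sqrt (goldenRatio + 2)) ^ (n + 1) *
      (Real.cos (Real.pi * (n + 1 : ℕ) / 10) +
        (goldenRatio - 1) ^ (n + 1) * Real.cos (3 * Real.pi * (n + 1 : ℕ) / 10)) := by
    unfold auxG auxA auxB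
    rw [← c10, ← c310, mul_pow]
    ring
  rw [hL, (key_all n).1, hR]
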